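/- Optimal vertex-restricted simplifications with vertex-injective warpings exist: let (X,ρ) be a metric space, let p ∈ [1,∞), let ℓ ≥ 2, let π ∈ X^m be a point sequence and let P be its set of vertices. Then there exists a point sequence π'' of complexity at most ℓ with all vertices in P such that dtw_p(π, π'') = min over σ of complexity at most ℓ with vertices in P of dtw_p(π, σ), and such that some optimal p-warping W between π and π'' contains no two pairs (t₁, t₂) and (t₁, t₂+1); i.e., no two distinct vertices of π'' are matched with the same vertex of π by W. -/

import Mathlib

open scoped BigOperators

/-- An `(m₁, m₂)`-warping (with 0-based indices): a sequence of index pairs starting at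
`(0,0)`, ending at `(m₁-1, m₂-1)`, whose consecutive increments lie in
`{(0,1), (1,0), (1,1)}`. -/
def IsWarping (m₁ m₂ : ℕ) (W : List (ℕ × ℕ)) : Prop :=
  W ≠ [] ∧ W.head? = some (0, 0) ∧ W.getLast? = some (m₁ - 1, m₂ - 1) ∧
    ∀ k, k + 1 < W.length →
      W.getD (k + 1) (0, 0) = ((W.getD k (0, 0)).1, (W.getD k (0, 0)).2 + 1) ∨
      W.getD (k + 1) (0, 0) = ((W.getD k (0, 0)).1 + 1, (W.getD k (0, 0)).2) ∨
      W.getD (k + 1) (0, 0) = ((W.getD k (0, 0)).1 + 1, (W.getD k (0, 0)).2 + 1)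

/-- The cost `Σ_{(i,j) ∈ W} ρ(σ_i, τ_j)^p` of a warping `W`. -/
noncomputable def warpCost {X : Type*} [MetricSpace X] [Inhabited X]
    (p : ℝ) (σ τ : List X) (W : List (ℕ × ℕ)) : ℝ :=
  (W.map fun ij => dist (σ.getD ij.1 default) (τ.getD ij.2 default) ^ p).sum

/-- The `p`-dynamic time warping distance between two point sequences. -/
noncomputable def dtw {X : Type*} [MetricSpace X] [Inhabited X] (p : ℝ) (σ τ : List X) : ℝ :=
  sInf { c : ℝ | ∃ W, IsWarping σ.length τ.length W ∧ c = warpCost p σ τ W ^ (1 / p) }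

/-- `cost_p^q(T, c) = Σ_{τ ∈ T} dtw_p(c, τ)^q`. -/
noncomputable def dtwCost {X : Type*} [MetricSpace X] [Inhabited X]
    (p q : ℝ) (T : Finset (List X)) (c : List X) : ℝ :=
  ∑ τ ∈ T, dtw p c τ ^ q

/-- `σ` is a point sequence of complexity at most `ℓ`, i.e. `σ ∈ X^{≤ℓ}`. -/
def SeqLE {X : Type*} (ℓ : ℕ) (σ : List X) : Prop := 2 ≤ σ.length ∧ σ.length ≤ ℓ

/-- `W` is an optimal `p`-warping between `σ` and `τ`. -/
def IsOptWarping {X : Type*} [MetricSpace X] [Inhabited X]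
    (p : ℝ) (σ τ : List X) (W : List (ℕ × ℕ)) : Prop :=
  IsWarping σ.length τ.length W ∧
    ∀ W', IsWarping σ.length τ.length W' → warpCost p σ τ W ≤ warpCost p σ τ W'

namespace DTWAux


def Step (a b : ℕ × ℕ) : Prop :=
  b = (a.1, a.2 + 1) ∨ b = (a.1 + 1, a.2) ∨ b = (a.1 + 1, a.2 + 1)

lemma chain'_step_iff {W : List (ℕ × ℕ)} :
    W.IsChain Step ↔ ∀ k, k + 1 < W.length →
      W.getD (k + 1) (0, 0) = ((W.getD k (0, 0)).1, (W.getD k (0, 0)).2 + 1) ∨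
      W.getD (k + 1) (0, 0) = ((W.getD k (0, 0)).1 + 1, (W.getD k (0, 0)).2) ∨
      W.getD (k + 1) (0, 0) = ((W.getD k (0, 0)).1 + 1, (W.getD k (0, 0)).2 + 1) := by
  rw [List.isChain_iff_getElem]
  constructor
  · intro h k hk
    have := h k (by omega)
    rw [List.getD_eq_getElem _ _ (by omega : k < W.length),
      List.getD_eq_getElem _ _ hk]
    simpa [Step] using this
  · intro h k hk
    have hk' : k + 1 < W.length := by omega
    have := h k hk'
    rw [List.getD_eq_getElem _ _ (by omega : k < W.length),
      List.getD_eq_getElem _ _ hk'] at this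
    simpa [Step, List.get_eq_getElem] using this

lemma isWarping_iff {m₁ m₂ : ℕ} {W : List (ℕ × ℕ)} :
    IsWarping m₁ m₂ W ↔ W ≠ [] ∧ W.head? = some (0, 0) ∧
      W.getLast? = some (m₁ - 1, m₂ - 1) ∧ W.IsChain Step := by
  unfold IsWarping
  rw [chain'_step_iff]

lemma warp_mono {W : List (ℕ × ℕ)} (hc : W.IsChain Step) {k l : ℕ} (hkl : k ≤ l)
    (hl : l < W.length) :
    (W.getD k (0,0)).1 ≤ (W.getD l (0,0)).1 ∧ (W.getD k (0,0)).2 ≤ (W.getD l (0,0)).2 ∧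
      (W.getD k (0,0)).1 + (W.getD k (0,0)).2 + (l - k) ≤
        (W.getD l (0,0)).1 + (W.getD l (0,0)).2 := by
  induction l, hkl using Nat.le_induction with
  | base => simp
  | succ l hkl ih =>
    have hl' : l < W.length := by omega
    obtain ⟨h1, h2, h3⟩ := ih hl'
    have hs := chain'_step_iff.1 hc l hl
    rcases hs with h | h | h <;> rw [h] <;>
      refine ⟨?_, ?_, ?_⟩ <;> simp only [Prod.fst, Prod.snd] <;> omega

lemma getD_zero {W : List (ℕ × ℕ)} {x : ℕ × ℕ} (h : W.head? = some x) :
    W.getD 0 (0,0) = x := by cases W <;> simp_all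

lemma getLast?_eq_getD {W : List (ℕ × ℕ)} (hne : W ≠ []) :
    W.getLast? = some (W.getD (W.length - 1) (0,0)) := by
  have hl : W.length - 1 < W.length := by
    cases W with
    | nil => simp at hne
    | cons a l => simp
  rw [List.getLast?_eq_getElem?, List.getElem?_eq_getElem hl,
    List.getD_eq_getElem _ _ hl]


lemma warp_getD_zero {m₁ m₂ : ℕ} {W : List (ℕ × ℕ)} (h : IsWarping m₁ m₂ W) :
    W.getD 0 (0,0) = (0, 0) := getD_zero h.2.1

lemma warp_getD_last {m₁ m₂ : ℕ} {W : List (ℕ × ℕ)} (h : IsWarping m₁ m₂ W) :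
    W.getD (W.length - 1) (0,0) = (m₁ - 1, m₂ - 1) := by
  have := (getLast?_eq_getD h.1).symm.trans h.2.2.1
  exact Option.some.inj this

lemma warp_bound {m₁ m₂ : ℕ} {W : List (ℕ × ℕ)} (h : IsWarping m₁ m₂ W)
    {k : ℕ} (hk : k < W.length) :
    (W.getD k (0,0)).1 ≤ m₁ - 1 ∧ (W.getD k (0,0)).2 ≤ m₂ - 1 ∧
      k ≤ (W.getD k (0,0)).1 + (W.getD k (0,0)).2 := by
  have hc : W.IsChain Step := (isWarping_iff.1 h).2.2.2
  have hlast := warp_getD_last h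
  have h0 := warp_getD_zero h
  have hm1 := warp_mono hc (Nat.le_sub_one_of_lt hk) (by omega : W.length - 1 < W.length)
  have hm2 := warp_mono hc (Nat.zero_le k) hk
  rw [hlast] at hm1
  rw [h0] at hm2
  simp at hm1 hm2 ⊢
  omega

lemma warp_length_le {m₁ m₂ : ℕ} {W : List (ℕ × ℕ)} (h : IsWarping m₁ m₂ W) :
    W.length ≤ m₁ + m₂ + 2 := by
  have hne := h.1
  have hl : 0 < W.length := List.length_pos_iff.2 hne
  have := warp_bound h (k := W.length - 1) (by omega)
  have hlast := warp_getD_last h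
  rw [hlast] at this
  simp at this
  omega

lemma warp_mem_bound {m₁ m₂ : ℕ} {W : List (ℕ × ℕ)} (h : IsWarping m₁ m₂ W)
    {q : ℕ × ℕ} (hq : q ∈ W) : q.1 ≤ m₁ - 1 ∧ q.2 ≤ m₂ - 1 := by
  obtain ⟨i, hi, rfl⟩ := List.mem_iff_getElem.1 hq
  have := warp_bound h hi
  rw [List.getD_eq_getElem _ _ hi] at this
  exact ⟨this.1, this.2.1⟩

lemma finite_lists {α : Type*} {s : Set α} (hs : s.Finite) (n : ℕ) :
    {l : List α | l.length ≤ n ∧ ∀ x ∈ l, x ∈ s}.Finite := by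
  haveI := hs.to_subtype
  apply ((List.finite_length_le s n).image (List.map (Subtype.val))).subset
  rintro l ⟨h1, h2⟩
  refine ⟨l.pmap (fun x h => ⟨x, h⟩) h2, by simpa using h1, ?_⟩
  simp [List.map_pmap]

lemma finite_warpings (m₁ m₂ : ℕ) : {W : List (ℕ × ℕ) | IsWarping m₁ m₂ W}.Finite := by
  apply (finite_lists (s := Set.Iic (m₁ - 1) ×ˢ Set.Iic (m₂ - 1))
    ((Set.finite_Iic _).prod (Set.finite_Iic _)) (m₁ + m₂ + 2)).subset
  intro W hW
  exact ⟨warp_length_le hW, fun q hq => warp_mem_bound hW hq⟩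


/-- the staircase warping -/
def stair (a b : ℕ) : List (ℕ × ℕ) :=
  ((List.range a).map fun i => (i, 0)) ++ ((List.range (b - 1)).map fun j => (a - 1, j + 1))

lemma stair_warping {a b : ℕ} (ha : 1 ≤ a) (hb : 1 ≤ b) : IsWarping a b (stair a b) := by
  rw [isWarping_iff]
  obtain ⟨a', rfl⟩ : ∃ a', a = a' + 1 := ⟨a - 1, by omega⟩
  have hne1 : ((List.range (a' + 1)).map fun i => ((i, 0) : ℕ × ℕ)) ≠ [] := by simp
  refine ⟨?_, ?_, ?_, ?_⟩
  · simp [stair]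
  · rw [stair, List.head?_append_of_ne_nil _ hne1]
    rw [List.range_succ_eq_map]
    simp
  · rcases Nat.lt_or_ge b 2 with hb2 | hb2
    · obtain rfl : b = 1 := by omega
      simp only [stair]
      norm_num
      rw [List.getLast?_eq_getElem?]
      simp
    · have hne2 : ((List.range (b - 1)).map fun j => ((a' + 1 - 1, j + 1) : ℕ × ℕ)) ≠ [] := by
        simp; omega
      rw [stair, List.getLast?_append_of_ne_nil _ hne2, List.getLast?_eq_getElem?]
      have hlen : ((List.range (b - 1)).map fun j => ((a' + 1 - 1, j + 1) : ℕ × ℕ)).length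
          = b - 1 := by simp
      rw [hlen, List.getElem?_eq_getElem (by simp; omega)]
      simp
      omega
  · rw [List.isChain_iff_getElem]
    intro i hi
    simp only [stair, List.length_append, List.length_map, List.length_range] at hi
    have hget : ∀ j (hj : j < a' + 1 + (b - 1)), (stair (a' + 1) b)[j]'(by
        simp [stair]; omega) = if j ≤ a' then (j, 0) else (a', j - a') := by
      intro j hj
      rcases Nat.lt_or_ge j (a' + 1) with h | h
      · have h' : j ≤ a' := by omega
        simp only [stair]
        rw [List.getElem_append_left (by simpa using h)]
        simp [h']
      · have h' : ¬ (j ≤ a') := by omega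
        simp only [stair]
        rw [List.getElem_append_right (by simpa using h)]
        simp only [List.getElem_map, List.getElem_range]
        have h2 : j - (a' + 1) + 1 = j - a' := by omega
        simp [h', h2]
    rw [hget i (by omega), hget (i + 1) (by omega)]
    rcases Nat.lt_or_ge (i + 1) (a' + 1) with h | h
    · have h1 : i ≤ a' := by omega
      have h2 : i + 1 ≤ a' := by omega
      simp [h1, h2, Step]
    · have h2 : ¬ (i + 1 ≤ a') := by omega
      rcases Nat.lt_or_ge i (a' + 1) with h3 | h3
      · have h4 : i ≤ a' := by omega
        have h5 : i = a' := by omega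
        simp [h4, h2, Step, h5]
      · have h4 : ¬ (i ≤ a') := by omega
        simp [h4, h2, Step]
        omega

lemma exists_warping {a b : ℕ} (ha : 1 ≤ a) (hb : 1 ≤ b) : ∃ W, IsWarping a b W :=
  ⟨stair a b, stair_warping ha hb⟩

section Cost
variable {X : Type*} [MetricSpace X] [Inhabited X] {p : ℝ}

lemma warpCost_nonneg (p : ℝ) (σ τ : List X) (W : List (ℕ × ℕ)) :
    0 ≤ warpCost p σ τ W := by
  apply List.sum_nonneg
  intro x hx
  simp only [List.mem_map] at hx
  obtain ⟨ij, _, rfl⟩ := hx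
  exact Real.rpow_nonneg dist_nonneg p

lemma warpCost_append (p : ℝ) (σ τ : List X) (A B : List (ℕ × ℕ)) :
    warpCost p σ τ (A ++ B) = warpCost p σ τ A + warpCost p σ τ B := by
  simp [warpCost]

lemma warpCost_cons (p : ℝ) (σ τ : List X) (x : ℕ × ℕ) (B : List (ℕ × ℕ)) :
    warpCost p σ τ (x :: B) =
      dist (σ.getD x.1 default) (τ.getD x.2 default) ^ p + warpCost p σ τ B := by
  simp [warpCost]

lemma dtw_le (hp : 1 ≤ p) {σ τ : List X} {W : List (ℕ × ℕ)}
    (hW : IsWarping σ.length τ.length W) :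
    dtw p σ τ ≤ warpCost p σ τ W ^ (1 / p) := by
  apply csInf_le
  · refine ⟨0, fun c hc => ?_⟩
    obtain ⟨V, hV, rfl⟩ := hc
    exact Real.rpow_nonneg (warpCost_nonneg _ _ _ _) _
  · exact ⟨W, hW, rfl⟩

lemma dtw_nonneg (p : ℝ) (σ τ : List X) : 0 ≤ dtw p σ τ := by
  rcases Set.eq_empty_or_nonempty
      { c : ℝ | ∃ W, IsWarping σ.length τ.length W ∧ c = warpCost p σ τ W ^ (1 / p) } with h | h
  · unfold dtw
    rw [h]
    simp [Real.sInf_empty]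
  · exact le_csInf h fun c hc => by
      obtain ⟨V, hV, rfl⟩ := hc
      exact Real.rpow_nonneg (warpCost_nonneg _ _ _ _) _

lemma dtw_eq_opt (hp : 1 ≤ p) {σ τ : List X} {W : List (ℕ × ℕ)}
    (hW : IsOptWarping p σ τ W) :
    dtw p σ τ = warpCost p σ τ W ^ (1 / p) := by
  refine le_antisymm (dtw_le hp hW.1) (le_csInf ⟨_, W, hW.1, rfl⟩ ?_)
  rintro c ⟨V, hV, rfl⟩
  exact Real.rpow_le_rpow (warpCost_nonneg _ _ _ _) (hW.2 V hV) (by positivity)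

lemma exists_min_opt_warping (p : ℝ) (σ τ : List X)
    (h1 : 1 ≤ σ.length) (h2 : 1 ≤ τ.length) :
    ∃ W, IsOptWarping p σ τ W ∧ ∀ W', IsOptWarping p σ τ W' → W.length ≤ W'.length := by
  obtain ⟨W₀, hW₀, hmin⟩ := Set.exists_min_image {W | IsWarping σ.length τ.length W}
    (warpCost p σ τ) (finite_warpings _ _) ⟨_, stair_warping h1 h2⟩
  obtain ⟨W, hW, hlen⟩ := Set.exists_min_image
    {W | IsWarping σ.length τ.length W ∧ warpCost p σ τ W ≤ warpCost p σ τ W₀}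
    List.length ((finite_warpings σ.length τ.length).subset fun _ h => h.1)
    ⟨W₀, hW₀, le_refl _⟩
  have hopt : IsOptWarping p σ τ W := ⟨hW.1, fun W' hW' => hW.2.trans (hmin W' hW')⟩
  refine ⟨W, hopt, fun W' hW' => hlen W' ⟨hW'.1, hW'.2 W₀ hW₀⟩⟩

end Cost

lemma step_shift {a b : ℕ × ℕ} (h : Step a b) (ha : 1 ≤ a.2) :
    Step (a.1, a.2 - 1) (b.1, b.2 - 1) := by
  obtain ⟨a1, a2⟩ := a
  obtain ⟨b1, b2⟩ := b
  simp only [Step, Prod.mk.injEq] at h ⊢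
  simp only at ha
  omega

lemma decomp {W : List (ℕ × ℕ)} {k : ℕ} (hk : k + 1 < W.length) :
    W = W.take k ++ W.getD k (0,0) :: W.getD (k+1) (0,0) :: W.drop (k+2) := by
  conv_lhs => rw [← List.take_append_drop k W]
  rw [List.drop_eq_getElem_cons (by omega : k < W.length)]
  rw [List.drop_eq_getElem_cons (by omega : k + 1 < W.length)]
  rw [List.getD_eq_getElem _ _ (by omega : k < W.length), List.getD_eq_getElem _ _ hk]

lemma head?_append_cons {α : Type*} (l₁ l₂ : List α) (x : α) :
    (l₁ ++ x :: l₂).head? = some (l₁.headD x) := by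
  cases l₁ <;> simp

lemma getLast?_append_cons_ne {α : Type*} (l₁ : List α) (x : α) {l₂ : List α} (h : l₂ ≠ []) :
    (l₁ ++ x :: l₂).getLast? = l₂.getLast? := by
  obtain ⟨a, t, rfl⟩ := List.exists_cons_of_ne_nil h
  rw [List.getLast?_append, List.getLast?_cons_cons]
  cases hlt : (a :: t).getLast? with
  | none => simp at hlt
  | some z => simp

lemma mem_take_getElem {α : Type*} {W : List α} {k : ℕ} {q : α} (hq : q ∈ W.take k) :
    ∃ i, i < k ∧ ∃ (h : i < W.length), W[i] = q := by
  obtain ⟨i, hi, hEq⟩ := List.mem_iff_getElem.1 hq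
  have hlen : (W.take k).length = min k W.length := by simp
  rw [hlen] at hi
  refine ⟨i, by omega, by omega, ?_⟩
  rw [← hEq, List.getElem_take]

lemma head?_drop {α : Type*} (W : List α) (n : ℕ) (h : n < W.length) :
    (W.drop n).head? = some (W[n]) := by
  rw [List.drop_eq_getElem_cons h]
  simp

end DTWAux

open DTWAux in
/-- **Optimal vertex-restricted simplifications with vertex-injective warpings exist**
(claim in Lemma `lemma:simplificationcorrectness1`): there is a point sequence `π''` of
complexity at most `ℓ` with vertices among those of `π`, minimizing `dtw_p(π,·)` among all
such sequences, and admitting an optimal `p`-warping that never matches two distinct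
vertices of `π''` with the same vertex of `π` (i.e. contains no pairs `(t₁,t₂)` and
`(t₁,t₂+1)` simultaneously). -/
theorem exists_optimal_vertex_restricted_simplification_injective_warping
    {X : Type*} [MetricSpace X] [Inhabited X]
    (p : ℝ) (hp : 1 ≤ p) (ℓ : ℕ) (hℓ : 2 ≤ ℓ)
    (π : List X) (hπ : 2 ≤ π.length) :
    ∃ π'' : List X, SeqLE ℓ π'' ∧ (∀ v ∈ π'', v ∈ π) ∧
      (∀ σ : List X, SeqLE ℓ σ → (∀ v ∈ σ, v ∈ π) → dtw p π π'' ≤ dtw p π σ) ∧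
      ∃ W : List (ℕ × ℕ), IsOptWarping p π π'' W ∧
        ∀ t₁ t₂ : ℕ, ¬((t₁, t₂) ∈ W ∧ (t₁, t₂ + 1) ∈ W) := by
  classical
  -- the candidate set
  have hπfin : {v : X | v ∈ π}.Finite :=
    π.toFinset.finite_toSet.subset fun v hv => List.mem_toFinset.2 hv
  set C : Set (List X) := {σ | SeqLE ℓ σ ∧ ∀ v ∈ σ, v ∈ π} with hCdef
  have hCfin : C.Finite := (finite_lists hπfin ℓ).subset fun σ hσ => ⟨hσ.1.2, hσ.2⟩
  have hCne : C.Nonempty := by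
    refine ⟨[π[0], π[1]], ⟨by simp [SeqLE]; omega, ?_⟩⟩
    intro v hv
    simp only [List.mem_cons, List.not_mem_nil, or_false] at hv
    rcases hv with rfl | rfl
    · exact List.getElem_mem _
    · exact List.getElem_mem _
  obtain ⟨σm, hσmC, hσmmin⟩ := Set.exists_min_image C (dtw p π) hCfin hCne
  obtain ⟨π'', hπ''C', hπ''len⟩ := Set.exists_min_image
    {σ | σ ∈ C ∧ dtw p π σ ≤ dtw p π σm} List.length
    (hCfin.subset fun _ h => h.1) ⟨σm, hσmC, le_refl _⟩
  obtain ⟨hπ''C, hπ''dtw⟩ := hπ''C'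
  obtain ⟨⟨h2m, hmℓ⟩, hsub⟩ := hπ''C
  obtain ⟨W, hWopt, hWlen⟩ := exists_min_opt_warping p π π'' (by omega) (by omega)
  refine ⟨π'', ⟨h2m, hmℓ⟩, hsub, ?_, W, hWopt, ?_⟩
  · intro σ hσ hσsub
    exact hπ''dtw.trans (hσmmin σ ⟨hσ, hσsub⟩)
  rintro t₁ t₂ ⟨hm1, hm2⟩
  -- notation
  have hW := hWopt.1
  obtain ⟨hne, hhead, hlast, hchain⟩ := isWarping_iff.1 hW
  set m₁ := π.length with hm₁
  set m₂ := π''.length with hm₂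
  set n := W.length with hn
  -- the two bad vertices are adjacent in W
  obtain ⟨i₁, hi₁, hEq1⟩ := List.mem_iff_getElem.1 hm1
  obtain ⟨i₂, hi₂, hEq2⟩ := List.mem_iff_getElem.1 hm2
  have hEq1' : W.getD i₁ (0,0) = (t₁, t₂) := by rw [List.getD_eq_getElem _ _ hi₁, hEq1]
  have hEq2' : W.getD i₂ (0,0) = (t₁, t₂ + 1) := by rw [List.getD_eq_getElem _ _ hi₂, hEq2]
  have hi12 : i₂ = i₁ + 1 := by
    rcases Nat.lt_or_ge i₁ i₂ with h | h
    · have := warp_mono hchain (Nat.le_of_lt h) hi₂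
      rw [hEq1', hEq2'] at this
      simp at this
      omega
    · exfalso
      have h2 := (warp_mono hchain h hi₁).2.1
      rw [hEq1', hEq2'] at h2
      simp at h2
  -- select the last bad index
  set P : ℕ → Prop := fun j => j + 1 < n ∧
    W.getD (j+1) (0,0) = ((W.getD j (0,0)).1, (W.getD j (0,0)).2 + 1) with hPdef
  have hPi₁ : P i₁ := ⟨by omega, by rw [hEq1', ← hi12, hEq2']⟩
  set k := Nat.findGreatest P n with hkdef
  have hPk : P k := Nat.findGreatest_spec (by omega : i₁ ≤ n) hPi₁
  have hgr : ∀ j, k < j → j ≤ n → ¬ P j := fun j h1 h2 => Nat.findGreatest_is_greatest h1 h2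
  obtain ⟨hk1, hy⟩ := hPk
  set x : ℕ × ℕ := W.getD k (0,0) with hxdef
  set y : ℕ × ℕ := W.getD (k+1) (0,0) with hydef
  set A : List (ℕ × ℕ) := W.take k with hAdef
  set B : List (ℕ × ℕ) := W.drop (k+2) with hBdef
  have hdec : W = A ++ x :: y :: B := decomp hk1
  have hAlen : A.length = k := by rw [hAdef]; simp; omega
  have hBlen : B.length = n - (k+2) := by rw [hBdef]; simp [hn]
  -- chain decomposition
  have hchain2 := hchain
  rw [hdec] at hchain2
  obtain ⟨cA, cR, cL⟩ := List.isChain_append.1 hchain2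
  obtain ⟨hxy, cR2⟩ := List.isChain_cons.1 cR
  obtain ⟨hyB, cB⟩ := List.isChain_cons.1 cR2
  -- head and last facts
  have hhead2 := hhead
  rw [hdec] at hhead2
  have hlast2 := hlast
  rw [hdec] at hlast2
  -- bounds
  have hxb := warp_bound hW (k := k) (by omega)
  rw [← hxdef] at hxb
  have hyb := warp_bound hW (k := k+1) hk1
  rw [← hydef] at hyb
  -- term nonnegativity
  have hterm : ∀ q : ℕ × ℕ,
      0 ≤ dist (π.getD q.1 default) (π''.getD q.2 default) ^ p :=
    fun q => Real.rpow_nonneg dist_nonneg p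
  -- case split on whether y is the last element
  rcases Nat.lt_or_ge (k + 2) n with hkn | hkn
  · -- y is not last; s = W.getD (k+2)
    have hs : (W.drop (k+2)).head? = some (W[k+2]'(by omega)) := head?_drop W (k+2) (by omega)
    set s : ℕ × ℕ := W.getD (k+2) (0,0) with hsdef
    have hs' : B.head? = some s := by
      rw [hBdef, hs, hsdef, List.getD_eq_getElem _ _ (by omega : k + 2 < W.length)]
    have hsb := warp_bound hW (k := k+2) (by omega)
    rw [← hsdef] at hsb
    have hstep : Step y s := hyB s hs'
    rcases hstep with h | h | h
    · -- s continues the bad run: contradiction with maximality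
      exact hgr (k+1) (by omega) (by omega) ⟨by omega, by rw [← hsdef, ← hydef] at *; exact h⟩
    · -- Surgery E : remove y from the warping
      have hBne : B ≠ [] := by
        rw [← List.length_pos_iff]
        omega
      have hycoord : s = (x.1 + 1, x.2 + 1) := by rw [h, hy]
      have hW'warp : IsWarping m₁ m₂ (A ++ x :: B) := by
        rw [isWarping_iff]
        refine ⟨by simp, ?_, ?_, ?_⟩
        · rw [head?_append_cons]
          rw [head?_append_cons] at hhead2
          exact hhead2
        · rw [getLast?_append_cons_ne A x hBne]
          rw [getLast?_append_cons_ne A x (by simp : (y :: B) ≠ [])] at hlast2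
          have h3 : (y :: B).getLast? = B.getLast? := by
            simpa using getLast?_append_cons_ne ([] : List (ℕ × ℕ)) y hBne
          rw [h3] at hlast2
          exact hlast2
        · refine List.isChain_append.2 ⟨cA, List.isChain_cons.2 ⟨?_, cB⟩, ?_⟩
          · intro z hz
            rw [hs'] at hz
            have hz' : z = s := (by simpa using hz : s = z).symm
            rw [hz', hycoord]
            right; right; rfl
          · intro a ha b hb
            have hb' : b = x := (by simpa using hb : x = b).symm
            rw [hb']
            exact cL a ha x (by simp)
      have hc : warpCost p π π'' (A ++ x :: B) +
          dist (π.getD y.1 default) (π''.getD y.2 default) ^ p = warpCost p π π'' W := by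
        conv_rhs => rw [hdec]
        rw [warpCost_append, warpCost_append, warpCost_cons, warpCost_cons, warpCost_cons]
        ring
      have hcle : warpCost p π π'' (A ++ x :: B) ≤ warpCost p π π'' W := by
        have := hterm y
        linarith
      have hW'opt : IsOptWarping p π π'' (A ++ x :: B) :=
        ⟨hW'warp, fun V hV => hcle.trans (hWopt.2 V hV)⟩
      have := hWlen _ hW'opt
      simp [List.length_append] at this
      omega
    · -- Surgery D : delete vertex x.2+1 from π''
      have hBne : B ≠ [] := by
        rw [← List.length_pos_iff]
        omega
      have hscoord : s = (x.1 + 1, x.2 + 2) := by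
        rw [h, hy]
      have hm₂3 : x.2 + 2 ≤ m₂ - 1 := by
        have := hsb.2.1
        rw [hscoord] at this
        exact this
      have herlen : (π''.eraseIdx (x.2+1)).length = m₂ - 1 := by
        rw [List.length_eraseIdx_of_lt (by omega : x.2 + 1 < π''.length)]
      have hBsnd : ∀ q ∈ B, x.2 + 2 ≤ q.2 ∧ q.2 ≤ m₂ - 1 := by
        intro q hq
        obtain ⟨i, hi, hEq⟩ := List.mem_iff_getElem.1 hq
        have hiB : i < B.length := hi
        have hidx : k + 2 + i < W.length := by
          rw [hBlen] at hiB
          omega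
        have hEq' : W.getD (k+2+i) (0,0) = q := by
          rw [List.getD_eq_getElem _ _ hidx, ← hEq]
          simp [hBdef]
        have hmono := (warp_mono hchain (by omega : k + 2 ≤ k + 2 + i) hidx).2.1
        rw [hEq', ← hsdef] at hmono
        have hbnd := (warp_bound hW (k := k + 2 + i) hidx).2.1
        rw [hEq'] at hbnd
        rw [hscoord] at hmono
        exact ⟨hmono, hbnd⟩
      have hs'map : (B.map (fun q => (q.1, q.2 - 1))).head? = some (x.1 + 1, x.2 + 1) := by
        rw [List.head?_map, hs', hscoord]
        simp
      have hW'warp : IsWarping m₁ (π''.eraseIdx (x.2+1)).length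
          (A ++ x :: B.map (fun q => (q.1, q.2 - 1))) := by
        rw [isWarping_iff]
        have hmapne : B.map (fun q : ℕ × ℕ => (q.1, q.2 - 1)) ≠ [] := by
          simpa using hBne
        refine ⟨by simp, ?_, ?_, ?_⟩
        · rw [head?_append_cons]
          rw [head?_append_cons] at hhead2
          exact hhead2
        · rw [getLast?_append_cons_ne A x hmapne, List.getLast?_map]
          rw [getLast?_append_cons_ne A x (by simp : (y :: B) ≠ [])] at hlast2
          have h3 : (y :: B).getLast? = B.getLast? := by
            simpa using getLast?_append_cons_ne ([] : List (ℕ × ℕ)) y hBne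
          rw [h3] at hlast2
          rw [hlast2, herlen]
          simp
        · refine List.isChain_append.2 ⟨cA, List.isChain_cons.2 ⟨?_, ?_⟩, ?_⟩
          · intro z hz
            rw [hs'map] at hz
            have hz' : z = (x.1 + 1, x.2 + 1) :=
              (show (x.1 + 1, x.2 + 1) = z by simpa using hz).symm
            rw [hz']
            right; right; rfl
          · rw [List.isChain_iff_getElem]
            intro i hi
            have hi' : i + 1 < B.length := by
              have : i + 1 < B.length := by simpa using hi
              omega
            simp only [List.get_eq_getElem, List.getElem_map]
            have hstepB : Step (B[i]'(by omega)) (B[i+1]'(by omega)) := by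
              have := List.isChain_iff_getElem.1 cB i (by omega : i + 1 < B.length)
              simpa using this
            have hb2 : x.2 + 2 ≤ (B[i]'(by omega)).2 := (hBsnd _ (List.getElem_mem _)).1
            exact step_shift hstepB (by omega)
          · intro a ha b hb
            have hb' : b = x := (by simpa using hb : x = b).symm
            rw [hb']
            exact cL a ha x (by simp)
      have hAsnd : ∀ q ∈ A ++ [x], q.2 ≤ x.2 := by
        intro q hq
        rw [List.mem_append] at hq
        rcases hq with hq | hq
        · obtain ⟨i, hik, hiW, hEq⟩ := mem_take_getElem (hAdef ▸ hq)
          have := (warp_mono hchain (Nat.le_of_lt hik) (by omega : k < W.length)).2.1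
          rw [List.getD_eq_getElem _ _ hiW, hEq, ← hxdef] at this
          exact this
        · have : q = x := by simpa using hq
          rw [this]
      have hcost1 : warpCost p π (π''.eraseIdx (x.2+1)) (A ++ [x])
          = warpCost p π π'' (A ++ [x]) := by
        unfold warpCost
        congr 1
        apply List.map_congr_left
        intro q hq
        have hq2 : q.2 ≤ x.2 := hAsnd q hq
        have hq2' : q.2 < (π''.eraseIdx (x.2+1)).length := by omega
        have hq2'' : q.2 < π''.length := by omega
        rw [List.getD_eq_getElem _ _ hq2', List.getD_eq_getElem _ _ hq2'']
        congr 2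
        rw [List.getElem_eraseIdx_of_lt _ (by omega : q.2 < x.2 + 1)]
      have hcost2 : warpCost p π (π''.eraseIdx (x.2+1)) (B.map (fun q => (q.1, q.2 - 1)))
          = warpCost p π π'' B := by
        unfold warpCost
        rw [List.map_map]
        congr 1
        apply List.map_congr_left
        intro q hq
        obtain ⟨hq1, hq2⟩ := hBsnd q hq
        simp only [Function.comp]
        have ha : q.2 - 1 < (π''.eraseIdx (x.2+1)).length := by omega
        have hb : q.2 < π''.length := by omega
        rw [List.getD_eq_getElem _ _ ha, List.getD_eq_getElem _ _ hb]
        congr 2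
        rw [List.getElem_eraseIdx_of_ge _ (by omega : x.2 + 1 ≤ q.2 - 1)]
        simp only [show q.2 - 1 + 1 = q.2 from by omega]
      have hcsplit : warpCost p π (π''.eraseIdx (x.2+1))
            (A ++ x :: B.map (fun q => (q.1, q.2 - 1)))
          = warpCost p π π'' (A ++ [x]) + warpCost p π π'' B := by
        rw [show A ++ x :: B.map (fun q : ℕ × ℕ => (q.1, q.2 - 1))
            = (A ++ [x]) ++ B.map (fun q : ℕ × ℕ => (q.1, q.2 - 1)) from by simp]
        rw [warpCost_append, hcost2, hcost1]
      have hc : warpCost p π π'' (A ++ [x]) + warpCost p π π'' B +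
          dist (π.getD y.1 default) (π''.getD y.2 default) ^ p = warpCost p π π'' W := by
        conv_rhs => rw [hdec]
        simp [warpCost]
        try ring
      have hcle : warpCost p π (π''.eraseIdx (x.2+1))
          (A ++ x :: B.map (fun q => (q.1, q.2 - 1))) ≤ warpCost p π π'' W := by
        have := hterm y
        rw [hcsplit]
        linarith
      have hdtwle : dtw p π (π''.eraseIdx (x.2+1)) ≤ dtw p π π'' := by
        have h1 := dtw_le hp hW'warp
        have h2 : dtw p π π'' = warpCost p π π'' W ^ (1 / p) := dtw_eq_opt hp hWopt
        rw [h2]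
        exact h1.trans (Real.rpow_le_rpow (warpCost_nonneg _ _ _ _) hcle (by positivity))
      have hσ'C : π''.eraseIdx (x.2+1) ∈ C ∧ dtw p π (π''.eraseIdx (x.2+1)) ≤ dtw p π σm := by
        refine ⟨⟨⟨by omega, by omega⟩, ?_⟩, hdtwle.trans hπ''dtw⟩
        intro v hv
        exact hsub v (List.eraseIdx_subset hv)
      have := hπ''len _ hσ'C
      omega
  · -- y is last
    have hB : B = [] := by rw [hBdef]; apply List.drop_eq_nil_of_le; omega
    have hyval : y = (m₁ - 1, m₂ - 1) := by
      rw [hdec, hB] at hlast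
      have : (A ++ x :: y :: ([] : List (ℕ × ℕ))).getLast? = some y := by
        rw [getLast?_append_cons_ne A x (by simp : (y :: []) ≠ [])]
        simp
      rw [this] at hlast
      exact Option.some.inj hlast
    rcases Nat.eq_zero_or_pos x.2 with hx2 | hx2
    · -- x.2 = 0, so m₂ = 2; do warping surgery using the predecessor
      have hx1 : x.1 = m₁ - 1 ∧ x.2 + 1 = m₂ - 1 := by
        rw [hy] at hyval
        exact ⟨congrArg Prod.fst hyval, congrArg Prod.snd hyval⟩
      have hk0 : k ≠ 0 := by
        intro hk0
        have hx0 : x = (0, 0) := by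
          rw [hxdef, hk0]
          exact getD_zero hhead
        have : x.1 = 0 := by rw [hx0]
        omega
      have hAne : A ≠ [] := by
        rw [← List.length_pos_iff]
        omega
      have hAlast : A.getLast? = some (W.getD (k-1) (0,0)) := by
        rw [getLast?_eq_getD hAne, hAlen]
        congr 1
        rw [hAdef, List.getD_eq_getElem _ _ (by simp; omega : k - 1 < (W.take k).length),
          List.getD_eq_getElem _ _ (by omega : k - 1 < W.length)]
        rw [List.getElem_take]
      set pr : ℕ × ℕ := W.getD (k-1) (0,0) with hprdef
      have hstep_pr : Step pr x := cL pr (by rw [hAlast]; rfl) x (by simp)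
      have hpr : x = (pr.1 + 1, pr.2) := by
        rcases hstep_pr with h | h | h
        · have := congrArg Prod.snd h
          simp at this
          omega
        · exact h
        · have := congrArg Prod.snd h
          simp at this
          omega
      have hW'warp : IsWarping m₁ m₂ (A ++ [y]) := by
        rw [isWarping_iff]
        obtain ⟨a, t, hAeq⟩ := List.exists_cons_of_ne_nil hAne
        refine ⟨by simp, ?_, ?_, ?_⟩
        · rw [head?_append_cons]
          rw [head?_append_cons] at hhead2
          rw [hAeq] at hhead2 ⊢
          simpa using hhead2
        · rw [List.getLast?_concat, hyval]
        · refine List.isChain_append.2 ⟨cA, List.isChain_singleton y, ?_⟩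
          intro a' ha' b hb
          have hb' : b = y := (by simpa using hb : y = b).symm
          have ha'' : a' = pr := by
            rw [hAlast] at ha'
            exact (by simpa using ha' : pr = a').symm
          rw [hb', ha'', hy, hpr]
          right; right; rfl
      have hc : warpCost p π π'' (A ++ [y]) +
          dist (π.getD x.1 default) (π''.getD x.2 default) ^ p = warpCost p π π'' W := by
        conv_rhs => rw [hdec, hB]
        rw [warpCost_append, warpCost_append, warpCost_cons, warpCost_cons]
        simp [warpCost]
        ring
      have hcle : warpCost p π π'' (A ++ [y]) ≤ warpCost p π π'' W := by
        have := hterm x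
        linarith
      have hW'opt : IsOptWarping p π π'' (A ++ [y]) :=
        ⟨hW'warp, fun V hV => hcle.trans (hWopt.2 V hV)⟩
      have hge := hWlen _ hW'opt
      have : (A ++ [y]).length = k + 1 := by simp [hAlen]
      omega
    · -- Surgery T : drop the last vertex of π''
      have hx1 : x.1 = m₁ - 1 ∧ x.2 + 1 = m₂ - 1 := by
        rw [hy] at hyval
        exact ⟨congrArg Prod.fst hyval, congrArg Prod.snd hyval⟩
      have hm₂3 : 3 ≤ m₂ := by omega
      have hσ'len : (π''.dropLast).length = m₂ - 1 := by simp [hm₂]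
      have hAsnd : ∀ q ∈ A ++ [x], q.2 ≤ x.2 := by
        intro q hq
        rw [List.mem_append] at hq
        rcases hq with hq | hq
        · obtain ⟨i, hik, hiW, hEq⟩ := mem_take_getElem (hAdef ▸ hq)
          have := (warp_mono hchain (Nat.le_of_lt hik) (by omega : k < W.length)).2.1
          rw [List.getD_eq_getElem _ _ hiW, hEq, ← hxdef] at this
          exact this
        · have : q = x := by simpa using hq
          rw [this]
      have hW'warp : IsWarping m₁ (π''.dropLast).length (A ++ [x]) := by
        rw [isWarping_iff]
        refine ⟨by simp, ?_, ?_, ?_⟩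
        · rw [head?_append_cons]
          rw [head?_append_cons] at hhead2
          exact hhead2
        · rw [List.getLast?_concat]
          rw [hσ'len]
          have : x = (m₁ - 1, m₂ - 1 - 1) := by
            have := hx1
            rw [show x = (x.1, x.2) from rfl]
            simp only [Prod.mk.injEq]
            omega
          rw [this]
        · refine List.isChain_append.2 ⟨cA, List.isChain_singleton x, ?_⟩
          intro a ha b hb
          have hb' : b = x := (by simpa using hb : x = b).symm
          rw [hb']
          exact cL a ha x (by simp)
      have hcost : warpCost p π (π''.dropLast) (A ++ [x]) = warpCost p π π'' (A ++ [x]) := by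
        unfold warpCost
        congr 1
        apply List.map_congr_left
        intro q hq
        have hq2 : q.2 ≤ x.2 := hAsnd q hq
        have hq2' : q.2 < (π''.dropLast).length := by omega
        have hq2'' : q.2 < π''.length := by omega
        rw [List.getD_eq_getElem _ _ hq2', List.getD_eq_getElem _ _ hq2'']
        congr 2
        rw [List.getElem_dropLast]
      have hc : warpCost p π π'' (A ++ [x]) +
          dist (π.getD y.1 default) (π''.getD y.2 default) ^ p = warpCost p π π'' W := by
        conv_rhs => rw [hdec, hB]
        rw [warpCost_append, warpCost_append, warpCost_cons, warpCost_cons]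
        simp [warpCost]
        ring
      have hcle : warpCost p π (π''.dropLast) (A ++ [x]) ≤ warpCost p π π'' W := by
        have := hterm y
        rw [hcost]
        linarith
      have hdtwle : dtw p π (π''.dropLast) ≤ dtw p π π'' := by
        have h1 : dtw p π (π''.dropLast) ≤ warpCost p π (π''.dropLast) (A ++ [x]) ^ (1 / p) :=
          dtw_le hp hW'warp
        have h2 : dtw p π π'' = warpCost p π π'' W ^ (1 / p) := dtw_eq_opt hp hWopt
        rw [h2]
        exact h1.trans (Real.rpow_le_rpow (warpCost_nonneg _ _ _ _) hcle (by positivity))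
      have hσ'C : π''.dropLast ∈ C ∧ dtw p π (π''.dropLast) ≤ dtw p π σm := by
        refine ⟨⟨⟨by omega, by omega⟩, ?_⟩, hdtwle.trans hπ''dtw⟩
        intro v hv
        exact hsub v (List.mem_of_mem_dropLast hv)
      have := hπ''len (π''.dropLast) hσ'C
      omega
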